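/- arXiv:1311.2491 — 3 statements merged into one kernel-verified Lean document; each statement's English description precedes it below -/
import Mathlib

section
/- Let t₁ < t₂ be real numbers, C₁ > C₂ > 0, and let k : [t₁,t₂] → ℝ be non-decreasing with k(t₁) ≥ C₁·e^{t₁} and k(t₂) ≤ C₂·e^{t₂}. Then the set { t ∈ [t₁,t₂] : C₂·e^t ≤ k(t) ≤ C₁·e^t } has Lebesgue measure at least log(C₁/C₂). -/
open Real MeasureTheory

/-- An isoperimetric-type lemma for non-decreasing functions crossing two
exponential curves. -/
theorem isoperimetric_lemma
    (t₁ t₂ C₁ C₂ : ℝ) (k : ℝ → ℝ)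
    (ht : t₁ < t₂) (hC₂ : 0 < C₂) (hC : C₂ < C₁)
    (hk : MonotoneOn k (Set.Icc t₁ t₂))
    (h₁ : C₁ * Real.exp t₁ ≤ k t₁) (h₂ : k t₂ ≤ C₂ * Real.exp t₂) :
    ENNReal.ofReal (Real.log (C₁ / C₂)) ≤
      volume {t ∈ Set.Icc t₁ t₂ | C₂ * Real.exp t ≤ k t ∧ k t ≤ C₁ * Real.exp t} := by
  have hC₁ : 0 < C₁ := hC₂.trans hC
  set S := {t ∈ Set.Icc t₁ t₂ | C₂ * Real.exp t ≤ k t ∧ k t ≤ C₁ * Real.exp t} with hS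
  set c₁ := Real.log C₁ with hc₁
  set c₂ := Real.log C₂ with hc₂
  have hc : c₂ < c₁ := Real.log_lt_log hC₂ hC
  set g : ℝ → ℝ := fun t => Real.log (k t) - t with hgdef
  -- positivity of k on the interval
  have hkpos : ∀ t ∈ Set.Icc t₁ t₂, 0 < k t := by
    intro t htm
    have h1 : k t₁ ≤ k t := hk (Set.left_mem_Icc.2 ht.le) htm htm.1
    have : 0 < C₁ * Real.exp t₁ := by positivity
    linarith
  -- membership characterizations
  have hmem₂ : ∀ t ∈ Set.Icc t₁ t₂, (C₂ * Real.exp t ≤ k t ↔ c₂ ≤ g t) := by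
    intro t htm
    have hlog : Real.log (C₂ * Real.exp t) = c₂ + t := by
      rw [Real.log_mul (ne_of_gt hC₂) (Real.exp_ne_zero t), Real.log_exp, hc₂]
    rw [hgdef, le_sub_iff_add_le]
    rw [← hlog, Real.log_le_log_iff (by positivity) (hkpos t htm)]
  have hmem₁ : ∀ t ∈ Set.Icc t₁ t₂, (k t ≤ C₁ * Real.exp t ↔ g t ≤ c₁) := by
    intro t htm
    have hlog : Real.log (C₁ * Real.exp t) = c₁ + t := by
      rw [Real.log_mul (ne_of_gt hC₁) (Real.exp_ne_zero t), Real.log_exp, hc₁]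
    rw [hgdef, sub_le_iff_le_add]
    rw [← hlog, Real.log_le_log_iff (hkpos t htm) (by positivity)]
  -- one-sided Lipschitz
  have hlip : ∀ s ∈ Set.Icc t₁ t₂, ∀ t ∈ Set.Icc t₁ t₂, s ≤ t → g s - g t ≤ t - s := by
    intro s hs t htm hst
    have : Real.log (k s) ≤ Real.log (k t) :=
      Real.log_le_log (hkpos s hs) (hk hs htm hst)
    simp only [hgdef]; linarith
  have hg₁ : c₁ ≤ g t₁ := by
    have := (hmem₁ t₁ (Set.left_mem_Icc.2 ht.le)).mpr
    by_contra h
    push_neg at h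
    have h2 : k t₁ ≤ C₁ * Real.exp t₁ := by
      rw [hmem₁ t₁ (Set.left_mem_Icc.2 ht.le)]; exact h.le
    -- combined with h₁ gives equality, so g t₁ = c₁
    have heq : k t₁ = C₁ * Real.exp t₁ := le_antisymm h2 h₁
    rw [hgdef] at h
    simp only [heq, Real.log_mul (ne_of_gt hC₁) (Real.exp_ne_zero t₁), Real.log_exp] at h
    linarith
  have hg₂ : g t₂ ≤ c₂ := by
    have hpos : 0 < k t₂ := hkpos t₂ (Set.right_mem_Icc.2 ht.le)
    have : Real.log (k t₂) ≤ Real.log (C₂ * Real.exp t₂) := Real.log_le_log hpos h₂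
    rw [Real.log_mul (ne_of_gt hC₂) (Real.exp_ne_zero t₂), Real.log_exp] at this
    rw [hgdef]; simp only; linarith
  -- the level sets and their sups
  set E : ℝ → Set ℝ := fun y => {t ∈ Set.Icc t₁ t₂ | y ≤ g t} with hE
  set T : ℝ → ℝ := fun y => sSup (E y) with hT
  have hEne : ∀ y ∈ Set.Ioo c₂ c₁, t₁ ∈ E y := by
    intro y hy
    exact ⟨Set.left_mem_Icc.2 ht.le, le_trans hy.2.le hg₁⟩
  have hEbdd : ∀ y, BddAbove (E y) := fun y => ⟨t₂, fun t htm => htm.1.2⟩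
  have hTmem : ∀ y ∈ Set.Ioo c₂ c₁, T y ∈ Set.Icc t₁ t₂ := by
    intro y hy
    exact ⟨le_csSup (hEbdd y) (hEne y hy), csSup_le ⟨t₁, hEne y hy⟩ fun t htm => htm.1.2⟩
  have hgT : ∀ y ∈ Set.Ioo c₂ c₁, y ≤ g (T y) := by
    intro y hy
    by_contra h
    push_neg at h
    obtain ⟨t, htE, hlt⟩ := exists_lt_of_lt_csSup ⟨t₁, hEne y hy⟩
      (show T y - (y - g (T y)) < T y by linarith)
    have hle : t ≤ T y := le_csSup (hEbdd y) htE
    have := hlip t htE.1 (T y) (hTmem y hy) hle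
    have := htE.2
    linarith
  have hTlt : ∀ y ∈ Set.Ioo c₂ c₁, T y < t₂ := by
    intro y hy
    rcases lt_or_eq_of_le (hTmem y hy).2 with h | h
    · exact h
    · exfalso; have := hgT y hy; rw [h] at this; linarith [hy.1]
  have hgTle : ∀ y ∈ Set.Ioo c₂ c₁, g (T y) ≤ c₁ := by
    intro y hy
    by_contra h
    push_neg at h
    set m := (T y + min t₂ (T y + (g (T y) - y))) / 2 with hm
    have hyc : y < g (T y) := lt_trans hy.2 h
    have h1 : T y < min t₂ (T y + (g (T y) - y)) :=
      lt_min (hTlt y hy) (by linarith)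
    have hm1 : T y < m := by rw [hm]; linarith
    have hm2 : m < min t₂ (T y + (g (T y) - y)) := by rw [hm]; linarith
    have hmIcc : m ∈ Set.Icc t₁ t₂ :=
      ⟨le_trans (hTmem y hy).1 hm1.le, (lt_of_lt_of_le hm2 (min_le_left _ _)).le⟩
    have hgm : y ≤ g m := by
      have := hlip (T y) (hTmem y hy) m hmIcc hm1.le
      have := lt_of_lt_of_le hm2 (min_le_right _ _)
      linarith
    have : m ≤ T y := le_csSup (hEbdd y) ⟨hmIcc, hgm⟩
    linarith
  -- expansion property
  have hexp : ∀ y ∈ Set.Ioo c₂ c₁, ∀ y' ∈ Set.Ioo c₂ c₁, y < y' →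
      T y' + (y' - y) ≤ T y := by
    intro y hy y' hy' hyy
    set t := T y' + (y' - y) with htdef
    have hT'mem := hTmem y' hy'
    have hgT' := hgT y' hy'
    have ht2 : t ≤ t₂ := by
      by_contra h
      push_neg at h
      have h1 : T y' ≤ t₂ := hT'mem.2
      have := hlip (T y') hT'mem t₂ (Set.right_mem_Icc.2 ht.le) h1
      have : y < c₂ := by linarith
      linarith [hy.1]
    have htIcc : t ∈ Set.Icc t₁ t₂ := ⟨by linarith [hT'mem.1, hyy], ht2⟩
    have hgt : y ≤ g t := by
      have := hlip (T y') hT'mem t htIcc (by linarith)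
      linarith
    exact le_csSup (hEbdd y) ⟨htIcc, hgt⟩
  -- T maps into S
  have hTS : ∀ y ∈ Set.Ioo c₂ c₁, T y ∈ S := by
    intro y hy
    refine ⟨hTmem y hy, ?_, ?_⟩
    · rw [hmem₂ _ (hTmem y hy)]; linarith [hgT y hy, hy.1]
    · rw [hmem₁ _ (hTmem y hy)]; exact hgTle y hy
  -- T is strictly antitone hence injective on Ioo
  have hanti : ∀ y ∈ Set.Ioo c₂ c₁, ∀ y' ∈ Set.Ioo c₂ c₁, y < y' → T y' < T y := by
    intro y hy y' hy' hyy
    have := hexp y hy y' hy' hyy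
    linarith
  have hinj : Set.InjOn T (Set.Ioo c₂ c₁) := by
    intro y hy y' hy' heq
    rcases lt_trichotomy y y' with h | h | h
    · exact absurd heq (hanti y hy y' hy' h).ne'
    · exact h
    · exact absurd heq (hanti y' hy' y hy h).ne
  -- distance expansion
  have hdist : ∀ y ∈ Set.Ioo c₂ c₁, ∀ y' ∈ Set.Ioo c₂ c₁,
      dist y y' ≤ dist (T y) (T y') := by
    intro y hy y' hy'
    rcases lt_trichotomy y y' with h | h | h
    · have := hexp y hy y' hy' h
      rw [Real.dist_eq, Real.dist_eq, abs_of_neg (by linarith : y - y' < 0),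
        abs_of_pos (by linarith : T y - T y' > 0)]
      linarith
    · simp [h]
    · have := hexp y' hy' y hy h
      rw [Real.dist_eq, Real.dist_eq, abs_of_pos (by linarith : y - y' > 0),
        abs_of_neg (by linarith : T y - T y' < 0)]
      linarith
  -- the inverse function is 1-Lipschitz on the image
  set A := T '' Set.Ioo c₂ c₁ with hA
  set f := Function.invFunOn T (Set.Ioo c₂ c₁) with hf
  have hfT : ∀ y ∈ Set.Ioo c₂ c₁, f (T y) = y := fun y hy =>
    hinj.leftInvOn_invFunOn hy
  have hflip : LipschitzOnWith 1 f A := by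
    rw [lipschitzOnWith_iff_dist_le_mul]
    rintro s ⟨y, hy, rfl⟩ s' ⟨y', hy', rfl⟩
    rw [hfT y hy, hfT y' hy', NNReal.coe_one, one_mul]
    exact hdist y hy y' hy'
  have himg : Set.Ioo c₂ c₁ ⊆ f '' A := by
    intro y hy
    exact ⟨T y, ⟨y, hy, rfl⟩, hfT y hy⟩
  -- measure chain
  have key : volume (Set.Ioo c₂ c₁) ≤ volume S := by
    calc volume (Set.Ioo c₂ c₁) ≤ volume (f '' A) := measure_mono himg
    _ = μH[1] (f '' A) := by rw [MeasureTheory.hausdorffMeasure_real]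
    _ ≤ (1 : ENNReal) ^ (1 : ℝ) * μH[1] A := hflip.hausdorffMeasure_image_le zero_le_one
    _ = μH[1] A := by simp
    _ ≤ μH[1] S := measure_mono (Set.image_subset_iff.2 fun y hy => hTS y hy)
    _ = volume S := by rw [MeasureTheory.hausdorffMeasure_real]
  rw [Real.volume_Ioo] at key
  rwa [Real.log_div (ne_of_gt hC₁) (ne_of_gt hC₂)]
end

section
/- Let s : [0,∞) → ℝ and M ≥ 0 satisfy e^{t'}·s(t') − e^{t}·s(t) ≥ −M·(e^{t'} − e^{t}) for all t' ≥ t ≥ 0. Suppose 0 ≤ t₁ ≤ t₂ and s(t₁) ≥ S₁ ≥ S₂ ≥ s(t₂) with S₂ + M > 0. Then the set { t ∈ [t₁,t₂] : S₂ ≤ s(t) ≤ S₁ } has Lebesgue measure at least log((S₁+M)/(S₂+M)). -/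
open Real MeasureTheory

theorem measure_of_intermediate_values
    (s : ℝ → ℝ) (M : ℝ) (hM : 0 ≤ M)
    (h1 : ∀ t t' : ℝ, 0 ≤ t → t ≤ t' →
      -M * (Real.exp t' - Real.exp t) ≤ Real.exp t' * s t' - Real.exp t * s t)
    (t₁ t₂ S₁ S₂ : ℝ) (ht₁ : 0 ≤ t₁) (ht : t₁ ≤ t₂)
    (hs₁ : S₁ ≤ s t₁) (hS : S₂ ≤ S₁) (hs₂ : s t₂ ≤ S₂) (hS₂M : 0 < S₂ + M) :
    ENNReal.ofReal (Real.log ((S₁ + M) / (S₂ + M))) ≤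
      volume {t ∈ Set.Icc t₁ t₂ | S₂ ≤ s t ∧ s t ≤ S₁} := by
  have hS₁M : 0 < S₁ + M := by linarith
  have hf : ∀ t t' : ℝ, 0 ≤ t → t ≤ t' →
      Real.exp t * (s t + M) ≤ Real.exp t' * (s t' + M) := by
    intro t t' h0 htt'
    have := h1 t t' h0 htt'
    nlinarith [this]
  set L := Real.log ((S₁ + M) / (S₂ + M)) with hL
  set E := {t | t ∈ Set.Icc t₁ t₂ ∧ S₁ ≤ s t} with hE
  have hEne : t₁ ∈ E := ⟨⟨le_refl _, ht⟩, hs₁⟩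
  have hEbdd : BddAbove E := ⟨t₂, fun u hu => hu.1.2⟩
  set c := sSup E with hc
  have hct₁ : t₁ ≤ c := le_csSup hEbdd hEne
  have hct₂ : c ≤ t₂ := csSup_le ⟨t₁, hEne⟩ (fun u hu => hu.1.2)
  have hc0 : 0 ≤ c := le_trans ht₁ hct₁
  -- key: for t ≥ c, f t ≥ exp c * (S₁+M)
  have hB : ∀ t, c ≤ t → Real.exp c * (S₁ + M) ≤ Real.exp t * (s t + M) := by
    intro t hctt
    have hft : 0 < Real.exp t * (s t + M) := by
      have := hf t₁ t ht₁ (le_trans hct₁ hctt)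
      nlinarith [Real.exp_pos t₁, Real.exp_pos t]
    have hle : c ≤ Real.log (Real.exp t * (s t + M) / (S₁ + M)) := by
      apply csSup_le ⟨t₁, hEne⟩
      intro u hu
      have hu0 : 0 ≤ u := le_trans ht₁ hu.1.1
      have hut : u ≤ t := le_trans (le_csSup hEbdd hu) hctt
      have h2 : Real.exp u * (S₁ + M) ≤ Real.exp t * (s t + M) := by
        have := hf u t hu0 hut
        nlinarith [Real.exp_pos u, hu.2]
      have h3 : Real.exp u ≤ Real.exp t * (s t + M) / (S₁ + M) :=
        (le_div_iff₀ hS₁M).mpr h2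
      calc u = Real.log (Real.exp u) := (Real.log_exp u).symm
        _ ≤ _ := Real.log_le_log (Real.exp_pos u) h3
    have h4 := Real.exp_le_exp.mpr hle
    rw [Real.exp_log (by positivity)] at h4
    calc Real.exp c * (S₁ + M)
        ≤ (Real.exp t * (s t + M) / (S₁ + M)) * (S₁ + M) :=
          mul_le_mul_of_nonneg_right h4 hS₁M.le
      _ = Real.exp t * (s t + M) := by field_simp
  have hexpL : Real.exp (c + L) = Real.exp c * (S₁ + M) / (S₂ + M) := by
    rw [Real.exp_add, hL, Real.exp_log (by positivity), mul_div_assoc]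
  -- c + L ≤ t₂
  have hD : c + L ≤ t₂ := by
    have h2 := hB t₂ hct₂
    have h3 : Real.exp c * (S₁ + M) ≤ Real.exp t₂ * (S₂ + M) := by
      nlinarith [Real.exp_pos t₂]
    have h4 : Real.exp (c + L) ≤ Real.exp t₂ := by
      rw [hexpL]
      exact (div_le_iff₀ hS₂M).mpr h3
    exact Real.exp_le_exp.mp h4
  have hsub : Set.Ioc c (c + L) ⊆ {t ∈ Set.Icc t₁ t₂ | S₂ ≤ s t ∧ s t ≤ S₁} := by
    intro t htm
    have ht1 : t₁ ≤ t := le_trans hct₁ htm.1.le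
    have ht2 : t ≤ t₂ := le_trans htm.2 hD
    refine ⟨⟨ht1, ht2⟩, ?_, ?_⟩
    · have h2 := hB t htm.1.le
      have h3 : Real.exp t * (S₂ + M) ≤ Real.exp c * (S₁ + M) := by
        have h5 : Real.exp t ≤ Real.exp c * (S₁ + M) / (S₂ + M) := by
          rw [← hexpL]; exact Real.exp_le_exp.mpr htm.2
        calc Real.exp t * (S₂ + M)
            ≤ (Real.exp c * (S₁ + M) / (S₂ + M)) * (S₂ + M) :=
              mul_le_mul_of_nonneg_right h5 hS₂M.le
          _ = Real.exp c * (S₁ + M) := by field_simp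
      nlinarith [Real.exp_pos t]
    · by_contra hcon
      push_neg at hcon
      have htE : t ∈ E := ⟨⟨ht1, ht2⟩, hcon.le⟩
      exact absurd (le_csSup hEbdd htE) (not_le.mpr htm.1)
  calc ENNReal.ofReal L = volume (Set.Ioc c (c + L)) := by
        rw [Real.volume_Ioc, add_sub_cancel_left]
    _ ≤ _ := measure_mono hsub
end

section
/- Let s : [0,∞) → ℝ be integrable over bounded intervals and M' ≥ 0 with |∫_0^x s(t) dt| ≤ M' for all x ≥ 0. Let e > 0 and 0 < S₂ < S₁, and suppose h ≥ 2·(e + M'/S₁ + M'/S₂). Then for every x ≥ 0, at least one of the following holds: (i) the set E_{x,h,S₁} = { t ∈ [x, x+h] : |s(t)| ≤ S₁ } has Lebesgue measure at least e; or (ii) there exist t₁, t₂ with x ≤ t₁ < t₂ ≤ x+h, s(t₁) ≥ S₁ and s(t₂) ≤ S₂. -/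
open Real MeasureTheory

theorem small_values_or_crossing
    (s : ℝ → ℝ) (M' : ℝ) (hM' : 0 ≤ M')
    (hmeas : Measurable s)
    (hint : ∀ a b : ℝ, IntegrableOn s (Set.Icc a b))
    (h2 : ∀ x : ℝ, 0 ≤ x → |∫ t in (0:ℝ)..x, s t| ≤ M')
    (e S₁ S₂ h : ℝ) (he : 0 < e) (hS₂ : 0 < S₂) (hS : S₂ < S₁)
    (hh : 2 * (e + M' / S₁ + M' / S₂) ≤ h) :
    ∀ x : ℝ, 0 ≤ x →
      ENNReal.ofReal e ≤ volume {t ∈ Set.Icc x (x + h) | |s t| ≤ S₁} ∨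
      ∃ t₁ t₂ : ℝ, x ≤ t₁ ∧ t₁ < t₂ ∧ t₂ ≤ x + h ∧ S₁ ≤ s t₁ ∧ s t₂ ≤ S₂ := by
  intro x hx
  by_contra hcon
  push_neg at hcon
  obtain ⟨hE, hcross⟩ := hcon
  have hS₁ : 0 < S₁ := hS₂.trans hS
  have hhpos : 0 < h := lt_of_lt_of_le (by positivity) hh
  set E := {t ∈ Set.Icc x (x + h) | |s t| ≤ S₁} with hEdef
  have hEsub : E ⊆ Set.Icc x (x+h) := fun t ht => ht.1
  have hm : (volume E).toReal < e := ENNReal.toReal_lt_of_lt_ofReal hE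
  set m := (volume E).toReal with hmdef
  -- τ
  set T : Set ℝ := insert (x+h) {t ∈ Set.Icc x (x+h) | S₁ ≤ s t} with hTdef
  have hTne : T.Nonempty := ⟨x+h, Set.mem_insert _ _⟩
  have hTlb : ∀ t ∈ T, x ≤ t := by
    intro t ht
    rcases ht with rfl | ht
    · linarith
    · exact ht.1.1
  set τ := sInf T with hτdef
  have hτle : τ ≤ x + h := csInf_le ⟨x, hTlb⟩ (Set.mem_insert _ _)
  have hτge : x ≤ τ := le_csInf hTne hTlb
  have hτ0 : 0 ≤ τ := hx.trans hτge
  have hbelow : ∀ t, x ≤ t → t < τ → s t < S₁ := by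
    intro t hxt htτ
    by_contra hc
    push_neg at hc
    have : τ ≤ t := csInf_le ⟨x, hTlb⟩ (Set.mem_insert_of_mem _ ⟨⟨hxt, htτ.le.trans hτle⟩, hc⟩)
    linarith
  have habove : ∀ t, τ < t → t ≤ x + h → S₂ < s t := by
    intro t hτt hth
    obtain ⟨u, hu, hut⟩ := exists_lt_of_csInf_lt hTne hτt
    rcases hu with rfl | hu
    · linarith
    · exact hcross u t hu.1.1 hut hth hu.2
  -- integrability
  have hii : ∀ a b : ℝ, IntervalIntegrable s volume a b := by
    intro a b
    exact IntegrableOn.intervalIntegrable (by simpa [Set.uIcc] using hint (min a b) (max a b))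
  have hbound : ∀ a b : ℝ, 0 ≤ a → 0 ≤ b → |∫ t in a..b, s t| ≤ 2*M' := by
    intro a b ha hb
    have h2a := h2 a ha
    have h2b := h2 b hb
    have heq : ∫ t in a..b, s t = (∫ t in (0:ℝ)..b, s t) - ∫ t in (0:ℝ)..a, s t :=
      (intervalIntegral.integral_interval_sub_left (hii 0 b) (hii 0 a)).symm
    rw [heq]
    calc |(∫ t in (0:ℝ)..b, s t) - ∫ t in (0:ℝ)..a, s t|
        ≤ |∫ t in (0:ℝ)..b, s t| + |∫ t in (0:ℝ)..a, s t| := abs_sub _ _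
      _ ≤ 2*M' := by linarith
  -- first interval
  set A₁ : Set ℝ := Set.Ioo x τ ∩ {t | -S₁ ≤ s t} with hA₁def
  set A₂ : Set ℝ := Set.Ioo x τ ∩ {t | s t < -S₁} with hA₂def
  have hmA₁ : MeasurableSet A₁ := measurableSet_Ioo.inter (measurableSet_le measurable_const hmeas)
  have hmA₂ : MeasurableSet A₂ := measurableSet_Ioo.inter (measurableSet_lt hmeas measurable_const)
  have hdisj : Disjoint A₁ A₂ := by
    rw [Set.disjoint_left]
    rintro t ⟨_, h1⟩ ⟨_, h2⟩
    simp only [Set.mem_setOf_eq] at h1 h2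
    linarith
  have hunion : A₁ ∪ A₂ = Set.Ioo x τ := by
    ext t
    constructor
    · rintro (⟨ht, _⟩ | ⟨ht, _⟩) <;> exact ht
    · intro ht
      rcases le_or_gt (-S₁) (s t) with hc | hc
      · exact Or.inl ⟨ht, hc⟩
      · exact Or.inr ⟨ht, hc⟩
  have hA₁fin : volume A₁ < ⊤ :=
    lt_of_le_of_lt (measure_mono Set.inter_subset_left) (by simp [Real.volume_Ioo])
  have hA₂fin : volume A₂ < ⊤ :=
    lt_of_le_of_lt (measure_mono Set.inter_subset_left) (by simp [Real.volume_Ioo])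
  set a₁ := (volume A₁).toReal with ha₁def
  set a₂ := (volume A₂).toReal with ha₂def
  have hsum : a₁ + a₂ = τ - x := by
    have := measure_union (μ := volume) hdisj hmA₂
    rw [hunion, Real.volume_Ioo] at this
    have := congrArg ENNReal.toReal this
    rw [ENNReal.toReal_ofReal (by linarith), ENNReal.toReal_add hA₁fin.ne hA₂fin.ne] at this
    linarith
  have ha₁m : a₁ ≤ m := by
    apply ENNReal.toReal_mono (lt_of_le_of_lt (measure_mono hEsub) (by simp [Real.volume_Icc])).ne
    apply measure_mono
    rintro t ⟨ht, hst⟩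
    refine ⟨⟨ht.1.le, ht.2.le.trans hτle⟩, ?_⟩
    rw [abs_le]
    exact ⟨hst, (hbelow t ht.1.le ht.2).le⟩
  have hintA₁ : IntegrableOn s A₁ :=
    (hint x τ).mono_set (Set.inter_subset_left.trans Set.Ioo_subset_Icc_self)
  have hintA₂ : IntegrableOn s A₂ :=
    (hint x τ).mono_set (Set.inter_subset_left.trans Set.Ioo_subset_Icc_self)
  have hI1 : |∫ t in A₁, s t| ≤ S₁ * a₁ := by
    have := norm_setIntegral_le_of_norm_le_const (μ := volume) (s := A₁) (C := S₁) hA₁fin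
      (fun t ht => by
        rw [Real.norm_eq_abs, abs_le]
        exact ⟨ht.2, (hbelow t ht.1.1.le ht.1.2).le⟩)
    rw [Real.norm_eq_abs] at this; exact this
  have hI2 : ∫ t in A₂, s t ≤ -S₁ * a₂ := by
    have := setIntegral_mono_on hintA₂ ((integrableOn_const_iff).mpr (Or.inr hA₂fin)) hmA₂
      (fun t ht => (le_of_lt ht.2 : s t ≤ -S₁))
    rwa [setIntegral_const, smul_eq_mul, mul_comm] at this
  have hsplit : ∫ t in Set.Ioo x τ, s t = (∫ t in A₁, s t) + ∫ t in A₂, s t := by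
    rw [← hunion]
    exact setIntegral_union hdisj hmA₂ hintA₁ hintA₂
  have hIoo1 : |∫ t in Set.Ioo x τ, s t| ≤ 2*M' := by
    rw [← integral_Ioc_eq_integral_Ioo, ← intervalIntegral.integral_of_le hτge]
    exact hbound x τ hx hτ0
  -- second interval
  have hI3 : S₂ * (x + h - τ) ≤ ∫ t in Set.Ioo τ (x+h), s t := by
    have hconst := setIntegral_mono_on
      ((integrableOn_const_iff).mpr (Or.inr (by simp [Real.volume_Ioo] : volume (Set.Ioo τ (x+h)) < ⊤)))
      ((hint τ (x+h)).mono_set Set.Ioo_subset_Icc_self) measurableSet_Ioo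
      (fun t ht => (habove t ht.1 ht.2.le).le)
    rw [setIntegral_const, smul_eq_mul, mul_comm,
      Real.volume_real_Ioo_of_le hτle] at hconst
    linarith [hconst]
  have hIoo2 : |∫ t in Set.Ioo τ (x+h), s t| ≤ 2*M' := by
    rw [← integral_Ioc_eq_integral_Ioo, ← intervalIntegral.integral_of_le hτle]
    exact hbound τ (x+h) hτ0 (by linarith)
  -- combine
  have key1 : S₁ * (τ - x) < S₁ * (2*e + 2*(M'/S₁)) := by
    have h1 : -(2*M') ≤ (∫ t in A₁, s t) + ∫ t in A₂, s t := by
      rw [← hsplit]; linarith [abs_le.mp hIoo1]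
    have h2 : (∫ t in A₁, s t) ≤ S₁ * a₁ := (abs_le.mp hI1).2
    have e1 : S₁ * (M'/S₁) = M' := by field_simp
    nlinarith [ha₁m, hm, hsum, hI2]
  have key1' : τ - x < 2*e + 2*(M'/S₁) := lt_of_mul_lt_mul_left key1 hS₁.le
  have key2 : S₂ * (x + h - τ) ≤ S₂ * (2*(M'/S₂)) := by
    have e2 : S₂ * (M'/S₂) = M' := by field_simp
    linarith [abs_le.mp hIoo2, hI3]
  have key2' : x + h - τ ≤ 2*(M'/S₂) := le_of_mul_le_mul_left key2 hS₂
  linarith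
end
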